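/- The Thue–Morse sequence t is not eventually periodic: there exist no period p ≥ 1 and threshold N such that t(n + p) = t(n) for all n ≥ N. In particular, the infinite word ABBABAAB… generated by the L-system cannot be divided into periods. -/

import Mathlib

/-- The Thue–Morse sequence: `t n` is the parity of the number of `1` digits
in the binary expansion of `n` (so `t 0 = 0`, `t (2n) = t n`, `t (2n+1) = 1 - t n`). -/
def thueMorse (n : ℕ) : Fin 2 := Fin.ofNat 2 (Nat.digits 2 n).sum

lemma tm_two_mul (n : ℕ) : thueMorse (2 * n) = thueMorse n := by
  rcases Nat.eq_zero_or_pos n with h | h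
  · subst h; rfl
  · unfold thueMorse
    simp only [Fin.ofNat_eq_cast]
    rw [Nat.digits_def' (by norm_num : 1 < 2) (by omega : 0 < 2 * n)]
    have h1 : 2 * n % 2 = 0 := by omega
    have h2 : 2 * n / 2 = n := by omega
    rw [h1, h2, List.sum_cons]
    push_cast
    simp

lemma tm_two_mul_add_one (n : ℕ) : thueMorse (2 * n + 1) = thueMorse n + 1 := by
  unfold thueMorse
  rw [Nat.digits_def' (by norm_num : 1 < 2) (by omega : 0 < 2 * n + 1)]
  have h1 : (2 * n + 1) % 2 = 1 := by omega
  have h2 : (2 * n + 1) / 2 = n := by omega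
  rw [h1, h2, List.sum_cons]
  apply Fin.ext
  simp only [Fin.val_ofNat, Fin.val_add, Fin.val_one]
  omega

lemma tm_pow_mul (j n : ℕ) : thueMorse (2 ^ j * n) = thueMorse n := by
  induction j with
  | zero => simp
  | succ k ih =>
      have : 2 ^ (k + 1) * n = 2 * (2 ^ k * n) := by ring
      rw [this, tm_two_mul, ih]

lemma tm_zero : thueMorse 0 = 0 := by
  simp [thueMorse]

lemma tm_one : thueMorse 1 = 1 := by
  have h := tm_two_mul_add_one 0
  norm_num at h
  rw [h, tm_zero]
  decide

lemma tm_two : thueMorse 2 = 1 := by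
  have h := tm_two_mul 1
  norm_num at h
  rw [h, tm_one]

lemma tm_three : thueMorse 3 = 0 := by
  have h := tm_two_mul_add_one 1
  norm_num at h
  rw [h, tm_one]
  decide

/-- No period from 1 onward. -/
lemma tm_no_period : ∀ p : ℕ, 1 ≤ p →
    ¬ (∀ m : ℕ, 1 ≤ m → thueMorse (m + p) = thueMorse m) := by
  intro p
  induction p using Nat.strong_induction_on with
  | _ p ih =>
    intro hp hper
    rcases Nat.even_or_odd p with ⟨q, hq⟩ | ⟨a, ha⟩
    · -- even case: q is also a period
      have hq1 : 1 ≤ q := by omega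
      refine ih q (by omega) hq1 ?_
      intro m hm
      have h := hper (2 * m) (by omega)
      have e : 2 * m + p = 2 * (m + q) := by omega
      rw [e, tm_two_mul, tm_two_mul] at h
      exact h
    · -- odd case: p = 2a + 1
      have key1 : ∀ m : ℕ, 1 ≤ m → thueMorse (m + a) = thueMorse m + 1 := by
        intro m hm
        have h := hper (2 * m) (by omega)
        have e : 2 * m + p = 2 * (m + a) + 1 := by omega
        rw [e, tm_two_mul_add_one, tm_two_mul] at h
        have h11 : (1 : Fin 2) + 1 = 0 := by decide
        calc thueMorse (m + a) = thueMorse (m + a) + (1 + 1) := by rw [h11, add_zero]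
          _ = thueMorse (m + a) + 1 + 1 := by rw [add_assoc]
          _ = thueMorse m + 1 := by rw [h]
      have key2 : ∀ m : ℕ, 1 ≤ m → thueMorse (m + a + 1) = thueMorse m + 1 := by
        intro m hm
        have h := hper (2 * m + 1) (by omega)
        have e : 2 * m + 1 + p = 2 * (m + a + 1) := by omega
        rw [e, tm_two_mul, tm_two_mul_add_one] at h
        exact h
      have const : ∀ m : ℕ, 1 ≤ m → thueMorse (m + 1) = thueMorse m := by
        intro m hm
        have h1 := key1 (m + 1) (by omega)
        have h2 := key2 m hm
        have e : m + 1 + a = m + a + 1 := by omega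
        rw [e] at h1
        have := h1.symm.trans h2
        exact add_right_cancel this
      have h23 : thueMorse 3 = thueMorse 2 := const 2 (by omega)
      rw [tm_two, tm_three] at h23
      exact absurd h23 (by decide)

/-- The Thue–Morse sequence is not eventually periodic: there are no period
`p ≥ 1` and threshold `N` such that `t (n + p) = t n` for all `n ≥ N`.  In
particular, the infinite word `ABBABAAB…` generated by the L-system cannot be
divided into periods. -/
theorem thueMorse_not_eventually_periodic :
    ¬ ∃ p : ℕ, 1 ≤ p ∧ ∃ N : ℕ, ∀ n ≥ N, thueMorse (n + p) = thueMorse n := by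
  rintro ⟨p, hp, N, h⟩
  refine tm_no_period p hp ?_
  intro m hm
  -- scale by 2^N ≥ N
  have hN : N ≤ 2 ^ N := Nat.lt_two_pow_self (n := N) |>.le
  have hscaled : thueMorse (2 ^ N * m + p) = thueMorse (2 ^ N * m) := by
    apply h
    calc N ≤ 2 ^ N := hN
    _ ≤ 2 ^ N * m := Nat.le_mul_of_pos_right _ (by omega)
  -- iterate periodicity 2^N times to shift by 2^N * p
  have hmult : ∀ k : ℕ, thueMorse (2 ^ N * m + k * p) = thueMorse (2 ^ N * m) := by
    intro k
    induction k with
    | zero => simp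
    | succ j ihj =>
        have hge : 2 ^ N * m + j * p ≥ N := by
          have : N ≤ 2 ^ N * m := by
            calc N ≤ 2 ^ N := hN
            _ ≤ 2 ^ N * m := Nat.le_mul_of_pos_right _ (by omega)
          omega
        have := h (2 ^ N * m + j * p) hge
        have e : 2 ^ N * m + j * p + p = 2 ^ N * m + (j + 1) * p := by ring
        rw [e] at this
        rw [this, ihj]
  have h2 := hmult (2 ^ N)
  have e : 2 ^ N * m + 2 ^ N * p = 2 ^ N * (m + p) := by ring
  rw [e, tm_pow_mul, tm_pow_mul] at h2
  exact h2
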